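/- Let q ≥ 2 be an integer (e.g. a prime power) and n ≥ 1. Then ∑_{λ ⊢ n} (−1)^{n − ℓ(λ)} · |GL_n(q)| / w_q(λ) = q^{n(n−1)/2}, as an identity in ℚ, where ℓ(λ) is the number of parts of λ. (Since |GL_n(q)|/w_q(λ) is the number of F-stable maximal tori of GL_n(F̄_q) of type λ and ℓ(λ) is the number of irreducible factors of such a torus, this says the number of F-stable maximal tori whose number of irreducible factors is ≡ n mod 2, minus the number whose number of irreducible factors is ≢ n mod 2, equals q^{(n²−n)/2}, the square root of the total number of tori.) -/

import Mathlib

open Finset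

namespace SumToriAux

/-- Gaussian binomial coefficient as a rational function value, defined by q-Pascal. -/
def qb (q : ℚ) : ℕ → ℕ → ℚ
  | _, 0 => 1
  | 0, _+1 => 0
  | n+1, i+1 => qb q n i + q^(i+1) * qb q n (i+1)

@[simp] lemma qb_zero_right (q : ℚ) (n : ℕ) : qb q n 0 = 1 := by cases n <;> rfl

lemma qb_succ (q : ℚ) (n i : ℕ) :
    qb q (n+1) (i+1) = qb q n i + q^(i+1) * qb q n (i+1) := rfl

lemma qb_eq_zero (q : ℚ) : ∀ {n i : ℕ}, n < i → qb q n i = 0 := by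
  intro n
  induction n with
  | zero => intro i h; cases i with
    | zero => omega
    | succ i => rfl
  | succ n ih =>
    intro i h
    cases i with
    | zero => omega
    | succ i =>
      rw [qb_succ, ih (by omega), ih (by omega)]
      ring

lemma qb_diag (q : ℚ) : ∀ n, qb q n n = 1 := by
  intro n
  induction n with
  | zero => rfl
  | succ n ih => rw [qb_succ, qb_eq_zero q (Nat.lt_succ_self n), ih]; ring

lemma qb_mul (q : ℚ) : ∀ (i d : ℕ),
    qb q (d+i) i * ∏ j ∈ Icc 1 i, (q^j - 1) = ∏ j ∈ Icc (d+1) (d+i), (q^j - 1) := by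
  intro i
  induction i with
  | zero => intro d; simp
  | succ i ih =>
    intro d
    induction d with
    | zero =>
      rw [Nat.zero_add, qb_diag]
      norm_num
    | succ d ihd =>
      have h1 : d + 1 + (i + 1) = (d + 1 + i) + 1 := by omega
      rw [h1, qb_succ]
      have h2 : d + 1 + i = d + (i + 1) := by omega
      rw [Finset.prod_Icc_succ_top (by omega : 1 ≤ i + 1)]
      rw [add_mul, ← mul_assoc]
      have hih : qb q (d + 1 + i) i * ∏ j ∈ Icc 1 i, (q^j - 1)
          = ∏ j ∈ Icc (d+2) (d+1+i), (q^j - 1) := by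
        have := ih (d+1)
        convert this using 3 <;> omega
      rw [hih]
      rw [h2] at *
      rw [← Finset.prod_Icc_succ_top (by omega : 1 ≤ i + 1) (fun j => q^j - 1), mul_assoc, ihd]
      have hsplit : ∏ j ∈ Icc (d+1) (d+(i+1)), (q^j - 1)
          = (q^(d+1) - 1) * ∏ j ∈ Icc (d+2) (d+(i+1)), (q^j - 1) := by
        rw [show Icc (d+1) (d+(i+1)) = Ico (d+1) (d+(i+1)+1) from (Finset.Ico_add_one_right_eq_Icc _ _).symm,
          show Icc (d+2) (d+(i+1)) = Ico (d+1+1) (d+(i+1)+1) from (Finset.Ico_add_one_right_eq_Icc _ _).symm,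
          Finset.prod_eq_prod_Ico_succ_bot (by omega : d+1 < d+(i+1)+1) (fun j => q^j - 1)]
      rw [hsplit]
      have htop : ∏ j ∈ Icc (d+1+1) (d+(i+1)+1), (q^j - 1)
          = (∏ j ∈ Icc (d+2) (d+(i+1)), (q^j - 1)) * (q^(d+(i+1)+1) - 1) := by
        rw [← Finset.prod_Icc_succ_top (by omega : d+2 ≤ d+(i+1)+1) (fun j => q^j - 1)]
      rw [htop]
      ring

/-- `g q m = ∏_{j=1}^m (1 - q^j)`. -/
def g (q : ℚ) (m : ℕ) : ℚ := ∏ j ∈ Icc 1 m, (1 - q^j)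

@[simp] lemma g_zero (q : ℚ) : g q 0 = 1 := by simp [g]

lemma g_succ (q : ℚ) (m : ℕ) : g q (m+1) = g q m * (1 - q^(m+1)) := by
  rw [g, g, Finset.prod_Icc_succ_top (by omega : 1 ≤ m + 1)]

lemma g_eq (q : ℚ) (m : ℕ) : g q m = (-1)^m * ∏ j ∈ Icc 1 m, (q^j - 1) := by
  induction m with
  | zero => simp
  | succ m ih =>
    rw [g_succ, ih, Finset.prod_Icc_succ_top (by omega : 1 ≤ m + 1)]
    ring

lemma D_eq (q : ℚ) : ∀ n : ℕ, ∑ k ∈ range n, qb q n (k+1) * g q k = n := by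
  intro n
  induction n with
  | zero => simp
  | succ n ih =>
    have e1 : ∀ k, qb q (n+1) (k+1) * g q k
        = qb q n k * g q k + q^(k+1) * qb q n (k+1) * g q k := by
      intro k; rw [qb_succ]; ring
    rw [Finset.sum_congr rfl (fun k _ => e1 k), Finset.sum_add_distrib,
      Finset.sum_range_succ' (fun k => qb q n k * g q k) n,
      Finset.sum_range_succ (fun k => q^(k+1) * qb q n (k+1) * g q k) n,
      qb_eq_zero q (Nat.lt_succ_self n)]
    have e2 : ∀ k, qb q n (k+1) * g q (k+1) + q^(k+1) * qb q n (k+1) * g q k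
        = qb q n (k+1) * g q k := by
      intro k; rw [g_succ]; ring
    have : (∑ k ∈ range n, qb q n (k+1) * g q (k+1))
          + (∑ k ∈ range n, q^(k+1) * qb q n (k+1) * g q k)
        = ∑ k ∈ range n, qb q n (k+1) * g q k := by
      rw [← Finset.sum_add_distrib]
      exact Finset.sum_congr rfl (fun k _ => e2 k)
    push_cast
    simp only [mul_zero, zero_mul, add_zero, g_zero, qb_zero_right, mul_one]
    linarith [this, ih]

lemma c_ne {q : ℚ} (hq : 2 ≤ q) {j : ℕ} (hj : 1 ≤ j) : q^j - 1 ≠ 0 := by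
  have : (1:ℚ) < q := by linarith
  have h2 : (1:ℚ) < q^j := one_lt_pow₀ this (by omega)
  intro h; linarith

lemma Pc_ne {q : ℚ} (hq : 2 ≤ q) (n : ℕ) : (∏ j ∈ Icc 1 n, (q^j - 1)) ≠ 0 := by
  apply Finset.prod_ne_zero_iff.2
  intro j hj
  exact c_ne hq (Finset.mem_Icc.1 hj).1

lemma Pc_split {q : ℚ} {i n : ℕ} (hi : 1 ≤ i) (hin : i ≤ n) :
    ∏ j ∈ Icc 1 n, (q^j - 1)
      = (∏ j ∈ Icc 1 (n - i), (q^j - 1)) * (qb q n i *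
          ((∏ j ∈ Icc 1 (i-1), (q^j - 1)) * (q^i - 1))) := by
  obtain ⟨d, rfl⟩ : ∃ d, n = d + i := ⟨n - i, by omega⟩
  have h1 : (∏ j ∈ Icc 1 (i-1), (q^j - 1)) * (q^i - 1) = ∏ j ∈ Icc 1 i, (q^j - 1) := by
    obtain ⟨j', rfl⟩ : ∃ j', i = j' + 1 := ⟨i - 1, by omega⟩
    rw [Finset.prod_Icc_succ_top (by omega : 1 ≤ j' + 1)]
    simp
  rw [h1, qb_mul q i d]
  have h2 : d + i - i = d := by omega
  rw [h2]
  rw [show Icc 1 (d+i) = Ico 1 (d+i+1) from (Finset.Ico_add_one_right_eq_Icc _ _).symm,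
    show Icc 1 d = Ico 1 (d+1) from (Finset.Ico_add_one_right_eq_Icc _ _).symm,
    show Icc (d+1) (d+i) = Ico (d+1) (d+i+1) from (Finset.Ico_add_one_right_eq_Icc _ _).symm]
  exact (Finset.prod_Ico_consecutive _ (by omega) (by omega)).symm

lemma lemB {q : ℚ} (hq : 2 ≤ q) (n : ℕ) :
    (n:ℚ) * (∏ j ∈ Icc 1 n, (q^j - 1))⁻¹
      = ∑ i ∈ Icc 1 n, (-1:ℚ)^(i-1)/(q^i-1) * (∏ j ∈ Icc 1 (n-i), (q^j - 1))⁻¹ := by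
  have key : ∀ i ∈ Icc 1 n, (-1:ℚ)^(i-1)/(q^i-1) * (∏ j ∈ Icc 1 (n-i), (q^j - 1))⁻¹
      = qb q n i * g q (i-1) * (∏ j ∈ Icc 1 n, (q^j - 1))⁻¹ := by
    intro i hi
    rw [Finset.mem_Icc] at hi
    have hsplit := Pc_split (q := q) hi.1 hi.2
    have hqb : qb q n i ≠ 0 := by
      intro h
      exact Pc_ne hq n (by rw [hsplit, h]; ring)
    have h1 := Pc_ne hq (n - i)
    have h2 := Pc_ne hq (i - 1)
    have h3 := c_ne hq hi.1
    rw [g_eq, hsplit]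
    field_simp
  rw [Finset.sum_congr rfl key]
  have hre : ∑ i ∈ Icc 1 n, qb q n i * g q (i-1) * (∏ j ∈ Icc 1 n, (q^j - 1))⁻¹
      = ∑ k ∈ range n, qb q n (k+1) * g q k * (∏ j ∈ Icc 1 n, (q^j - 1))⁻¹ := by
    rw [show Icc 1 n = Ico 1 (n+1) from (Finset.Ico_add_one_right_eq_Icc _ _).symm,
      Finset.sum_Ico_eq_sum_range]
    apply Finset.sum_congr (by norm_num)
    intro k _
    congr 2
    · congr 1; omega
    · congr 1; omega
  rw [hre, ← Finset.sum_mul, D_eq]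

/-! ### Partition side -/

/-- The weight `w_q(λ)` restricted to a window `Icc 1 N`. -/
def Wp (q : ℚ) (N : ℕ) (s : Multiset ℕ) : ℚ :=
  ∏ i ∈ Icc 1 N,
    ((i : ℚ) ^ (s.count i) * (Nat.factorial (s.count i) : ℚ) * (q^i - 1) ^ (s.count i))

/-- The signed partition sum. -/
def T (q : ℚ) (n : ℕ) : ℚ :=
  ∑ P : Nat.Partition n, (-1:ℚ)^(n - Multiset.card P.parts) / Wp q n P.parts

lemma mem_Icc_of_mem_parts {n : ℕ} (P : Nat.Partition n) {i : ℕ} (h : i ∈ P.parts) :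
    i ∈ Icc 1 n := by
  rw [Finset.mem_Icc]
  refine ⟨P.parts_pos h, ?_⟩
  rw [← P.parts_sum]
  exact Multiset.single_le_sum (fun x _ => Nat.zero_le x) _ h

lemma count_parts_eq_zero {n : ℕ} (P : Nat.Partition n) {i : ℕ} (h : i ∉ Icc 1 n) :
    P.parts.count i = 0 :=
  Multiset.count_eq_zero.2 (fun hm => h (mem_Icc_of_mem_parts P hm))

lemma card_parts_le {n : ℕ} (P : Nat.Partition n) : Multiset.card P.parts ≤ n := by
  have : ∀ s : Multiset ℕ, (∀ x ∈ s, 0 < x) → Multiset.card s ≤ s.sum := by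
    intro s
    induction s using Multiset.induction with
    | empty => simp
    | @cons a s ih =>
      intro h
      simp only [Multiset.card_cons, Multiset.sum_cons]
      have h1 := h a (Multiset.mem_cons_self a s)
      have h2 := ih (fun x hx => h x (Multiset.mem_cons_of_mem hx))
      omega
  have h := this _ (fun x hx => P.parts_pos hx)
  rwa [P.parts_sum] at h

lemma Wp_ne_zero {q : ℚ} (hq : 2 ≤ q) (N : ℕ) (s : Multiset ℕ) : Wp q N s ≠ 0 := by
  apply Finset.prod_ne_zero_iff.2
  intro i hi
  have hi1 : 1 ≤ i := (Finset.mem_Icc.1 hi).1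
  have h1 : (i:ℚ) ≠ 0 := Nat.cast_ne_zero.2 (by omega)
  have h2 : (Nat.factorial (s.count i) : ℚ) ≠ 0 := Nat.cast_ne_zero.2 (Nat.factorial_ne_zero _)
  have h3 := c_ne hq hi1
  positivity

lemma Wp_extend {q : ℚ} {m n : ℕ} (hmn : m ≤ n) (μ : Nat.Partition m) :
    Wp q n μ.parts = Wp q m μ.parts := by
  refine (Finset.prod_subset (Finset.Icc_subset_Icc_right hmn) ?_).symm
  intro x _ hx
  have : μ.parts.count x = 0 := by
    rcases Nat.lt_or_ge x 1 with h | h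
    · exact count_parts_eq_zero μ (by simp [Finset.mem_Icc]; omega)
    · exact count_parts_eq_zero μ (by
        intro hmem; exact hx (by
          rw [Finset.mem_Icc] at *; omega))
  simp [this]

/-- Insert a part `i` into a partition of `n - i`. -/
def insp {n : ℕ} (i : ℕ) (hi : 1 ≤ i) (hin : i ≤ n) (μ : Nat.Partition (n - i)) :
    Nat.Partition n where
  parts := i ::ₘ μ.parts
  parts_pos := by
    intro j hj
    rcases Multiset.mem_cons.1 hj with rfl | hj
    · omega
    · exact μ.parts_pos hj
  parts_sum := by rw [Multiset.sum_cons, μ.parts_sum]; omega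

lemma sum_partition_eq {n i : ℕ} (hi : 1 ≤ i) (hin : i ≤ n) (F : Nat.Partition n → ℚ)
    (h0 : ∀ P, i ∉ P.parts → F P = 0) :
    ∑ P : Nat.Partition n, F P = ∑ μ : Nat.Partition (n - i), F (insp i hi hin μ) := by
  classical
  rw [← Finset.sum_filter_of_ne (s := Finset.univ) (p := fun P : Nat.Partition n => i ∈ P.parts)
    (fun P _ hF => by by_contra h; exact hF (h0 P h))]
  refine Finset.sum_bij' (fun P hP => (⟨P.parts.erase i, ?_, ?_⟩ : Nat.Partition (n - i)))
    (fun μ _ => insp i hi hin μ) ?_ ?_ ?_ ?_ ?_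
  · intro j hj
    exact P.parts_pos (Multiset.mem_of_mem_erase hj)
  · have hPi : i ∈ P.parts := (Finset.mem_filter.1 hP).2
    have := P.parts_sum
    rw [← Multiset.cons_erase hPi, Multiset.sum_cons] at this
    omega
  · intro a ha; exact Finset.mem_univ _
  · intro μ _
    simp only [Finset.mem_filter, Finset.mem_univ, true_and, insp]
    exact Multiset.mem_cons_self i _
  · intro P hP
    have hPi : i ∈ P.parts := (Finset.mem_filter.1 hP).2
    apply Nat.Partition.ext
    simp only [insp]
    exact Multiset.cons_erase hPi
  · intro μ _
    apply Nat.Partition.ext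
    simp only [insp]
    exact Multiset.erase_cons_head i _
  · intro P hP
    have hPi : i ∈ P.parts := (Finset.mem_filter.1 hP).2
    exact (congrArg F (Nat.Partition.ext (Multiset.cons_erase hPi))).symm

lemma parts_weight_sum {n : ℕ} (P : Nat.Partition n) :
    ∑ i ∈ Icc 1 n, (i:ℚ) * (P.parts.count i : ℚ) = (n:ℚ) := by
  have hnat : ∑ i ∈ Icc 1 n, P.parts.count i * i = n := by
    have h1 : P.parts.toFinset ⊆ Icc 1 n := fun x hx =>
      mem_Icc_of_mem_parts P (Multiset.mem_toFinset.1 hx)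
    have h2 : (P.parts.map id).sum = ∑ m ∈ P.parts.toFinset, P.parts.count m • id m :=
      Finset.sum_multiset_map_count _ _
    rw [Multiset.map_id] at h2
    have h3 : ∑ m ∈ P.parts.toFinset, P.parts.count m • id m
        = ∑ m ∈ Icc 1 n, P.parts.count m • id m := by
      apply Finset.sum_subset h1
      intro x _ hx
      simp [Multiset.count_eq_zero.2 (fun hm => hx (Multiset.mem_toFinset.2 hm))]
    have h4 : P.parts.sum = ∑ m ∈ Icc 1 n, P.parts.count m * m := by
      rw [h2, h3]; apply Finset.sum_congr rfl; intro x _; simp [smul_eq_mul]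
    rw [← h4, P.parts_sum]
  calc ∑ i ∈ Icc 1 n, (i:ℚ) * (P.parts.count i : ℚ)
      = ((∑ i ∈ Icc 1 n, P.parts.count i * i : ℕ) : ℚ) := by push_cast; apply Finset.sum_congr rfl; intro x _; ring
    _ = (n:ℚ) := by rw [hnat]

lemma Wp_cons {q : ℚ} {n i : ℕ} (hi : i ∈ Icc 1 n) (s : Multiset ℕ) :
    Wp q n (i ::ₘ s) = ((i:ℚ) * ((s.count i : ℚ) + 1) * (q^i - 1)) * Wp q n s := by
  unfold Wp
  rw [← Finset.mul_prod_erase _ _ hi, ← Finset.mul_prod_erase _ _ hi]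
  have h1 : ∀ j ∈ (Icc 1 n).erase i,
      (j:ℚ) ^ ((i ::ₘ s).count j) * (Nat.factorial ((i ::ₘ s).count j) : ℚ)
        * (q^j - 1) ^ ((i ::ₘ s).count j)
      = (j:ℚ) ^ (s.count j) * (Nat.factorial (s.count j) : ℚ) * (q^j - 1) ^ (s.count j) := by
    intro j hj
    rw [Multiset.count_cons_of_ne (Finset.ne_of_mem_erase hj) _]
  rw [Finset.prod_congr rfl h1, Multiset.count_cons_self, Nat.factorial_succ]
  push_cast
  ring

lemma recA {q : ℚ} (hq : 2 ≤ q) {n : ℕ} (hn : 1 ≤ n) :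
    (n:ℚ) * T q n = ∑ i ∈ Icc 1 n, (-1:ℚ)^(i-1)/(q^i-1) * T q (n-i) := by
  have step1 : (n:ℚ) * T q n = ∑ i ∈ Icc 1 n, ∑ P : Nat.Partition n,
      ((i:ℚ) * (P.parts.count i : ℚ))
        * ((-1:ℚ)^(n - Multiset.card P.parts) / Wp q n P.parts) := by
    rw [T, Finset.mul_sum, Finset.sum_comm]
    apply Finset.sum_congr rfl
    intro P _
    rw [← Finset.sum_mul, parts_weight_sum P]
  rw [step1]
  apply Finset.sum_congr rfl
  intro i hi
  obtain ⟨hi1, hin⟩ := Finset.mem_Icc.1 hi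
  rw [sum_partition_eq hi1 hin _ (fun P hP => by
    rw [Multiset.count_eq_zero.2 hP]; push_cast; ring)]
  rw [T, Finset.mul_sum]
  apply Finset.sum_congr rfl
  intro μ _
  have hW : Wp q n ((insp i hi1 hin μ).parts)
      = ((i:ℚ) * ((μ.parts.count i : ℚ) + 1) * (q^i - 1)) * Wp q (n-i) μ.parts := by
    show Wp q n (i ::ₘ μ.parts) = _
    rw [Wp_cons hi, Wp_extend (show n - i ≤ n by omega)]
  have hcard := card_parts_le μ
  have hc := c_ne hq hi1
  have hWne := Wp_ne_zero hq (n-i) μ.parts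
  have hiq : (i:ℚ) ≠ 0 := Nat.cast_ne_zero.2 (by omega)
  have hm1 : ((μ.parts.count i : ℚ) + 1) ≠ 0 := by positivity
  have hcount : ((insp i hi1 hin μ).parts).count i = μ.parts.count i + 1 := by
    show (i ::ₘ μ.parts).count i = _
    rw [Multiset.count_cons_self]
  have hcardc : Multiset.card ((insp i hi1 hin μ).parts) = Multiset.card μ.parts + 1 := by
    show Multiset.card (i ::ₘ μ.parts) = _
    rw [Multiset.card_cons]
  rw [hW, hcount, hcardc,
    show n - (Multiset.card μ.parts + 1) = (i-1) + ((n-i) - Multiset.card μ.parts) by omega,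
    pow_add]
  push_cast
  field_simp

lemma T_zero (q : ℚ) : T q 0 = 1 := by
  rw [T]
  rw [Finset.sum_eq_single_of_mem (default : Nat.Partition 0) (Finset.mem_univ _)
    (fun P _ hP => absurd (Subsingleton.elim P default) hP)]
  have hp : (default : Nat.Partition 0).parts = 0 := by
    have := (default : Nat.Partition 0).parts_sum
    by_contra h
    obtain ⟨a, ha⟩ := Multiset.exists_mem_of_ne_zero h
    have := (default : Nat.Partition 0).parts_pos ha
    have h4 : a ≤ Multiset.sum (default : Nat.Partition 0).parts :=
      Multiset.single_le_sum (fun x _ => Nat.zero_le x) _ ha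
    omega
  rw [hp]
  simp [Wp]

lemma T_eq {q : ℚ} (hq : 2 ≤ q) : ∀ n : ℕ, T q n = (∏ j ∈ Icc 1 n, (q^j - 1))⁻¹ := by
  intro n
  induction n using Nat.strong_induction_on with
  | _ n ih =>
    rcases Nat.eq_zero_or_pos n with rfl | hn
    · simp [T_zero]
    · have h1 := recA hq hn
      have h2 : ∑ i ∈ Icc 1 n, (-1:ℚ)^(i-1)/(q^i-1) * T q (n-i)
          = ∑ i ∈ Icc 1 n, (-1:ℚ)^(i-1)/(q^i-1) * (∏ j ∈ Icc 1 (n-i), (q^j - 1))⁻¹ := by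
        apply Finset.sum_congr rfl
        intro i hi
        rw [ih (n-i) (by have := (Finset.mem_Icc.1 hi).1; omega)]
      rw [h2, ← lemB hq n] at h1
      exact mul_left_cancel₀ (Nat.cast_ne_zero.2 (by omega) : (n:ℚ) ≠ 0) h1

end SumToriAux

open SumToriAux in
/-- The signed count of `F`-stable maximal tori of `GL_n(F̄_q)` by parity of the number
of irreducible factors: `∑_{λ ⊢ n} (-1)^(n - ℓ(λ)) |GL_n(q)| / w_q(λ) = q^(n(n-1)/2)`. -/
theorem sum_tori_signed (q : ℕ) (hq : 2 ≤ q) (n : ℕ) (hn : 1 ≤ n) :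
    ∑ P : Nat.Partition n,
        ((-1 : ℚ) ^ (n - Multiset.card P.parts)) *
          ((∏ i ∈ range n, ((q : ℚ) ^ n - (q : ℚ) ^ i)) /
            (∏ i ∈ Icc 1 n,
              ((i : ℚ) ^ (P.parts.count i) * (Nat.factorial (P.parts.count i) : ℚ) *
                ((q : ℚ) ^ i - 1) ^ (P.parts.count i))))
      = (q : ℚ) ^ (n * (n - 1) / 2) := by
  have hQ : (2:ℚ) ≤ (q:ℚ) := by exact_mod_cast hq
  have hstep : ∑ P : Nat.Partition n,
        ((-1 : ℚ) ^ (n - Multiset.card P.parts)) *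
          ((∏ i ∈ range n, ((q : ℚ) ^ n - (q : ℚ) ^ i)) /
            (∏ i ∈ Icc 1 n,
              ((i : ℚ) ^ (P.parts.count i) * (Nat.factorial (P.parts.count i) : ℚ) *
                ((q : ℚ) ^ i - 1) ^ (P.parts.count i))))
      = (∏ i ∈ range n, ((q:ℚ)^n - (q:ℚ)^i)) * T (q:ℚ) n := by
    rw [T, Finset.mul_sum]
    apply Finset.sum_congr rfl
    intro P _
    simp only [Wp]
    ring
  rw [hstep, T_eq hQ]
  have hG : ∏ i ∈ range n, ((q:ℚ)^n - (q:ℚ)^i)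
      = (q:ℚ)^(n*(n-1)/2) * ∏ j ∈ Icc 1 n, ((q:ℚ)^j - 1) := by
    have h1 : ∀ i ∈ range n, (q:ℚ)^n - (q:ℚ)^i = (q:ℚ)^i * ((q:ℚ)^(n-i) - 1) := by
      intro i hi
      rw [mul_sub, mul_one, ← pow_add, Nat.add_sub_cancel' (le_of_lt (Finset.mem_range.1 hi))]
    rw [Finset.prod_congr rfl h1, Finset.prod_mul_distrib, Finset.prod_pow_eq_pow_sum]
    congr 1
    · congr 1
      have := Finset.sum_range_id_mul_two n
      omega
    · have h2 : ∀ i ∈ range n, (q:ℚ)^(n-i) - 1 = (fun j => (q:ℚ)^(j+1) - 1) (n - 1 - i) := by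
        intro i hi
        have := Finset.mem_range.1 hi
        simp only
        congr 2
        omega
      rw [Finset.prod_congr rfl h2, Finset.prod_range_reflect (fun j => (q:ℚ)^(j+1) - 1) n,
        show Icc 1 n = Ico 1 (n+1) from (Finset.Ico_add_one_right_eq_Icc _ _).symm,
        Finset.prod_Ico_eq_prod_range]
      apply Finset.prod_congr (by norm_num)
      intro k _
      congr 2
      omega
  rw [hG, mul_assoc, mul_inv_cancel₀ (Pc_ne hQ n), mul_one]
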